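/- arXiv:1302.7098 — 2 statements merged into one kernel-verified Lean document; each statement's English description precedes it below -/
import Mathlib

section
/- There exists a constant C > 0, depending only on δ, β_S, β_Ω, such that for all h ∈ (0,1/4) and each component index i ∈ {1,2,3}: ∫_{Ω_{h,δ}} |∫_{x₃}^{h+γ_s(r)} ∂_hφ̃_h^i(x₁,x₂,s) ds|² dx ≤ C², where ∂_hφ̃_h^i denotes the derivative of the family h ↦ φ̃_h^i with respect to the parameter h, and r = √(x₁²+x₂²). -/
open Real MeasureTheory intervalIntegral

noncomputable section

/-- `γ_s(r) = 1 - √(1 - r²)`. -/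
def gam (r : ℝ) : ℝ := 1 - Real.sqrt (1 - r ^ 2)

/-- `α_P(r) = (h + γ_s(r)) / β_Ω`. -/
def aP (βΩ h r : ℝ) : ℝ := (h + gam r) / βΩ

/-- `α_S(r) = (1/β_S + 2) (h + γ_s(r))`. -/
def aS (βS h r : ℝ) : ℝ := (1 / βS + 2) * (h + gam r)

/-- The cubic `Φ(r,t) = P₁(r) t + P₂(r) t² + P₃(r) t³` of the slip case. -/
def Phi (βS βΩ h r t : ℝ) : ℝ :=
  6 * (2 + aS βS h r) / (12 + 4 * (aS βS h r + aP βΩ h r) + aS βS h r * aP βΩ h r) * t +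
  3 * (2 + aS βS h r) * aP βΩ h r / (12 + 4 * (aS βS h r + aP βΩ h r) + aS βS h r * aP βΩ h r) * t ^ 2 +
  -(2 * (aS βS h r + aS βS h r * aP βΩ h r + aP βΩ h r)) / (12 + 4 * (aS βS h r + aP βΩ h r) + aS βS h r * aP βΩ h r) * t ^ 3

/-- `Ψ(r,z) = Φ(r, z / (h + γ_s(r)))`. -/
def Psi (βS βΩ h r z : ℝ) : ℝ := Phi βS βΩ h r (z / (h + gam r))

/-- Partial derivative in the first (`r`) variable. -/
def dR (f : ℝ → ℝ → ℝ) : ℝ → ℝ → ℝ := fun r z => deriv (fun r' => f r' z) r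

/-- Partial derivative in the second (`z`) variable. -/
def dZ (f : ℝ → ℝ → ℝ) : ℝ → ℝ → ℝ := fun r z => deriv (fun z' => f r z') z

/-- `r(x) = √(x₁² + x₂²)`. -/
def rad (x : ℝ × ℝ × ℝ) : ℝ := Real.sqrt (x.1 ^ 2 + x.2.1 ^ 2)

/-- The cusp region `Ω_{h,δ} = {x : 0 < x₃ < h + γ_s(r), r < δ}`. -/
def Omg (h δ : ℝ) : Set (ℝ × ℝ × ℝ) :=
  {x | 0 < x.2.2 ∧ x.2.2 < h + gam (rad x) ∧ rad x < δ}

/-- First component of the test field `φ̃_h`. -/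
def tphi1 (βS βΩ h : ℝ) (x : ℝ × ℝ × ℝ) : ℝ :=
  1 / 2 * (-x.1 * dZ (Psi βS βΩ h) (rad x) x.2.2)

/-- Second component of the test field `φ̃_h`. -/
def tphi2 (βS βΩ h : ℝ) (x : ℝ × ℝ × ℝ) : ℝ :=
  1 / 2 * (-x.2.1 * dZ (Psi βS βΩ h) (rad x) x.2.2)

/-- Third component of the test field `φ̃_h`: `(1/(2r)) ∂_r[r² Ψ(r,z)]` at `z = x₃`. -/
def tphi3 (βS βΩ h : ℝ) (x : ℝ × ℝ × ℝ) : ℝ :=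
  1 / 2 * (1 / rad x * deriv (fun r' => r' ^ 2 * Psi βS βΩ h r' x.2.2) (rad x))

/-- Partial derivative `∂₁` of a function on `ℝ³`. -/
def p1 (f : ℝ × ℝ × ℝ → ℝ) (x : ℝ × ℝ × ℝ) : ℝ := deriv (fun s => f (s, x.2.1, x.2.2)) x.1

/-- Partial derivative `∂₂` of a function on `ℝ³`. -/
def p2 (f : ℝ × ℝ × ℝ → ℝ) (x : ℝ × ℝ × ℝ) : ℝ := deriv (fun s => f (x.1, s, x.2.2)) x.2.1

/-- Partial derivative `∂₃` of a function on `ℝ³`. -/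
def p3 (f : ℝ × ℝ × ℝ → ℝ) (x : ℝ × ℝ × ℝ) : ℝ := deriv (fun s => f (x.1, x.2.1, s)) x.2.2

/-- The components of the test field `φ̃_h`, indexed by `Fin 3`. -/
def tcmp (βS βΩ h : ℝ) (i : Fin 3) : ℝ × ℝ × ℝ → ℝ :=
  if i = 0 then tphi1 βS βΩ h else if i = 1 then tphi2 βS βΩ h else tphi3 βS βΩ h

namespace CuspAux

/-- quadratic -/
def quad (a b c u : ℝ) : ℝ := a + b * u + c * u ^ 2
def quad' (a b c u : ℝ) : ℝ := b + 2 * c * u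

lemma hasDerivAt_quad (a b c u : ℝ) : HasDerivAt (fun x => quad a b c x) (quad' a b c u) u := by
  have h := (((hasDerivAt_id u).const_mul b).const_add a).add ((hasDerivAt_pow 2 u).const_mul c)
  refine h.congr_deriv ?_
  simp only [quad']; push_cast; ring

lemma hasDerivAt_quad' (a b c u : ℝ) : HasDerivAt (fun x => quad' a b c x) (2 * c) u := by
  have h := ((hasDerivAt_id u).const_mul (2 * c)).const_add b
  refine h.congr_deriv ?_
  ring

lemma continuous_quad (a b c : ℝ) : Continuous (fun u => quad a b c u) := by
  unfold quad; fun_prop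

lemma continuous_quad' (a b c : ℝ) : Continuous (fun u => quad' a b c u) := by
  unfold quad'; fun_prop

/-- denominator Δ -/
def den (A B u : ℝ) : ℝ := quad 12 (4 * (A + B)) (A * B) u

lemma den_pos {A B : ℝ} (hA : 0 < A) (hB : 0 < B) {u : ℝ} (hu : 0 ≤ u) : 0 < den A B u := by
  have h1 : 0 ≤ 4 * (A + B) * u := by
    apply mul_nonneg _ hu; linarith
  have h2 : 0 ≤ A * B * u ^ 2 := mul_nonneg (mul_pos hA hB).le (sq_nonneg u)
  unfold den quad; linarith

def rq (a b c A B u : ℝ) : ℝ := quad a b c u / den A B u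

def rq' (a b c A B u : ℝ) : ℝ :=
  (quad' a b c u * den A B u - quad a b c u * quad' 12 (4 * (A + B)) (A * B) u) / den A B u ^ 2

/-- numerator of rq' -/
def nm (a b c A B u : ℝ) : ℝ :=
  quad' a b c u * den A B u - quad a b c u * quad' 12 (4 * (A + B)) (A * B) u

def nm' (a b c A B u : ℝ) : ℝ :=
  (2 * c * den A B u + quad' a b c u * quad' 12 (4 * (A + B)) (A * B) u) -
  (quad' a b c u * quad' 12 (4 * (A + B)) (A * B) u + quad a b c u * (2 * (A * B)))

def rq'' (a b c A B u : ℝ) : ℝ :=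
  (nm' a b c A B u * den A B u ^ 2 - nm a b c A B u * (2 * den A B u ^ 1 * quad' 12 (4 * (A + B)) (A * B) u)) /
  (den A B u ^ 2) ^ 2

lemma hasDerivAt_rq (a b c A B u : ℝ) (h : den A B u ≠ 0) :
    HasDerivAt (fun x => rq a b c A B x) (rq' a b c A B u) u :=
  (hasDerivAt_quad a b c u).div (hasDerivAt_quad 12 (4 * (A + B)) (A * B) u) h

lemma hasDerivAt_nm (a b c A B u : ℝ) :
    HasDerivAt (fun x => nm a b c A B x) (nm' a b c A B u) u := by
  have h := ((hasDerivAt_quad' a b c u).mul (hasDerivAt_quad 12 (4 * (A + B)) (A * B) u)).sub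
    ((hasDerivAt_quad a b c u).mul (hasDerivAt_quad' 12 (4 * (A + B)) (A * B) u))
  exact h.congr_deriv (by unfold nm' den; ring)

lemma hasDerivAt_rq' (a b c A B u : ℝ) (h : den A B u ≠ 0) :
    HasDerivAt (fun x => rq' a b c A B x) (rq'' a b c A B u) u := by
  have hden : HasDerivAt (fun x => den A B x ^ 2)
      ((2 : ℕ) * den A B u ^ 1 * quad' 12 (4 * (A + B)) (A * B) u) u :=
    (hasDerivAt_quad 12 (4 * (A + B)) (A * B) u).pow 2
  have h2 := (hasDerivAt_nm a b c A B u).div hden (pow_ne_zero 2 h)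
  refine h2.congr_deriv ?_
  unfold rq''; push_cast; ring

lemma continuousOn_rq (a b c A B : ℝ) {S : Set ℝ} (h : ∀ u ∈ S, den A B u ≠ 0) :
    ContinuousOn (fun u => rq a b c A B u) S := by
  unfold rq
  exact ContinuousOn.div (continuous_quad a b c).continuousOn
    (continuous_quad 12 (4 * (A + B)) (A * B)).continuousOn h

lemma continuousOn_rq' (a b c A B : ℝ) {S : Set ℝ} (h : ∀ u ∈ S, den A B u ≠ 0) :
    ContinuousOn (fun u => rq' a b c A B u) S := by
  unfold rq' den quad quad'
  apply ContinuousOn.div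
  · fun_prop
  · fun_prop
  · exact fun u hu => pow_ne_zero 2 (h u hu)

lemma continuousOn_rq'' (a b c A B : ℝ) {S : Set ℝ} (h : ∀ u ∈ S, den A B u ≠ 0) :
    ContinuousOn (fun u => rq'' a b c A B u) S := by
  unfold rq'' nm' nm den quad quad'
  apply ContinuousOn.div
  · fun_prop
  · fun_prop
  · exact fun u hu => pow_ne_zero 2 (pow_ne_zero 2 (h u hu))


/-! coefficient triples: t1 = (12, 6A, 0), t2 = (0, 6B, 3AB), t3 = (0, -2(A+B), -2AB) -/

def dd1 (A B u : ℝ) : ℝ := rq' 12 (6 * A) 0 A B u * u - rq 12 (6 * A) 0 A B u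
def dd2 (A B u : ℝ) : ℝ := rq' 0 (6 * B) (3 * (A * B)) A B u * u - 2 * rq 0 (6 * B) (3 * (A * B)) A B u
def dd3 (A B u : ℝ) : ℝ :=
  rq' 0 (-(2 * (A + B))) (-(2 * (A * B))) A B u * u - 3 * rq 0 (-(2 * (A + B))) (-(2 * (A * B))) A B u
def ee1 (A B u : ℝ) : ℝ :=
  rq'' 12 (6 * A) 0 A B u * u ^ 2 - 2 * rq' 12 (6 * A) 0 A B u * u + 2 * rq 12 (6 * A) 0 A B u
def ee2 (A B u : ℝ) : ℝ :=
  rq'' 0 (6 * B) (3 * (A * B)) A B u * u ^ 2 - 4 * rq' 0 (6 * B) (3 * (A * B)) A B u * u +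
    6 * rq 0 (6 * B) (3 * (A * B)) A B u
def ee3 (A B u : ℝ) : ℝ :=
  rq'' 0 (-(2 * (A + B))) (-(2 * (A * B))) A B u * u ^ 2 -
    6 * rq' 0 (-(2 * (A + B))) (-(2 * (A * B))) A B u * u +
    12 * rq 0 (-(2 * (A + B))) (-(2 * (A * B))) A B u

def sFun (A B u z : ℝ) : ℝ :=
  rq 12 (6 * A) 0 A B u * (z / u) + rq 0 (6 * B) (3 * (A * B)) A B u * (z / u) ^ 2 +
    rq 0 (-(2 * (A + B))) (-(2 * (A * B))) A B u * (z / u) ^ 3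

def wFun (A B u s : ℝ) : ℝ :=
  (rq 12 (6 * A) 0 A B u + 2 * rq 0 (6 * B) (3 * (A * B)) A B u * (s / u) +
    3 * rq 0 (-(2 * (A + B))) (-(2 * (A * B))) A B u * (s / u) ^ 2) * (1 / u)

def wU (A B u s : ℝ) : ℝ :=
  (dd1 A B u + 2 * dd2 A B u * (s / u) + 3 * dd3 A B u * (s / u) ^ 2) / u ^ 2

def sU (A B u z : ℝ) : ℝ :=
  (dd1 A B u * (z / u) + dd2 A B u * (z / u) ^ 2 + dd3 A B u * (z / u) ^ 3) / u

def sUU (A B u z : ℝ) : ℝ :=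
  (ee1 A B u * (z / u) + ee2 A B u * (z / u) ^ 2 + ee3 A B u * (z / u) ^ 3) / u ^ 2

lemma hasDerivAt_sFun_z (A B u s : ℝ) :
    HasDerivAt (fun z => sFun A B u z) (wFun A B u s) s := by
  have h1 : HasDerivAt (fun z : ℝ => z / u) (1 / u) s := by
    simpa using (hasDerivAt_id s).div_const u
  have h := ((h1.const_mul (rq 12 (6 * A) 0 A B u)).add
      ((h1.pow 2).const_mul (rq 0 (6 * B) (3 * (A * B)) A B u))).add
      ((h1.pow 3).const_mul (rq 0 (-(2 * (A + B))) (-(2 * (A * B))) A B u))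
  refine h.congr_deriv ?_
  simp only [wFun]; push_cast; ring

lemma hasDerivAt_wFun_u (A B s : ℝ) {u : ℝ} (hu : u ≠ 0) (hden : den A B u ≠ 0) :
    HasDerivAt (fun v => wFun A B v s) (wU A B u s) u := by
  have hdivs : HasDerivAt (fun v : ℝ => s / v) ((0 * u - s * 1) / u ^ 2) u :=
    (hasDerivAt_const u s).div (hasDerivAt_id u) hu
  have hinv : HasDerivAt (fun v : ℝ => 1 / v) ((0 * u - 1 * 1) / u ^ 2) u :=
    (hasDerivAt_const u (1:ℝ)).div (hasDerivAt_id u) hu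
  have hbig := ((hasDerivAt_rq 12 (6 * A) 0 A B u hden).add
      (((hasDerivAt_rq 0 (6 * B) (3 * (A * B)) A B u hden).const_mul 2).mul hdivs)).add
      (((hasDerivAt_rq 0 (-(2 * (A + B))) (-(2 * (A * B))) A B u hden).const_mul 3).mul (hdivs.pow 2))
  have h := hbig.mul hinv
  refine h.congr_deriv ?_
  simp only [wU, dd1, dd2, dd3]
  push_cast
  simp only [Pi.add_apply, Pi.mul_apply, Pi.pow_apply]
  field_simp
  ring

lemma hasDerivAt_sFun_u (A B z : ℝ) {u : ℝ} (hu : u ≠ 0) (hden : den A B u ≠ 0) :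
    HasDerivAt (fun v => sFun A B v z) (sU A B u z) u := by
  have hdivz : HasDerivAt (fun v : ℝ => z / v) ((0 * u - z * 1) / u ^ 2) u :=
    (hasDerivAt_const u z).div (hasDerivAt_id u) hu
  have h := (((hasDerivAt_rq 12 (6 * A) 0 A B u hden).mul hdivz).add
      ((hasDerivAt_rq 0 (6 * B) (3 * (A * B)) A B u hden).mul (hdivz.pow 2))).add
      ((hasDerivAt_rq 0 (-(2 * (A + B))) (-(2 * (A * B))) A B u hden).mul (hdivz.pow 3))
  refine h.congr_deriv ?_
  simp only [sU, dd1, dd2, dd3]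
  push_cast
  simp only [Pi.pow_apply]
  field_simp
  ring

lemma hasDerivAt_sU_u (A B z : ℝ) {u : ℝ} (hu : u ≠ 0) (hden : den A B u ≠ 0) :
    HasDerivAt (fun v => sU A B v z) (sUU A B u z) u := by
  have hdivz : HasDerivAt (fun v : ℝ => z / v) ((0 * u - z * 1) / u ^ 2) u :=
    (hasDerivAt_const u z).div (hasDerivAt_id u) hu
  have hd1 : HasDerivAt (fun v => dd1 A B v)
      ((rq'' 12 (6 * A) 0 A B u * u + rq' 12 (6 * A) 0 A B u * 1) - rq' 12 (6 * A) 0 A B u) u :=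
    ((hasDerivAt_rq' 12 (6 * A) 0 A B u hden).mul (hasDerivAt_id u)).sub
      (hasDerivAt_rq 12 (6 * A) 0 A B u hden)
  have hd2 : HasDerivAt (fun v => dd2 A B v)
      ((rq'' 0 (6 * B) (3 * (A * B)) A B u * u + rq' 0 (6 * B) (3 * (A * B)) A B u * 1) -
        2 * rq' 0 (6 * B) (3 * (A * B)) A B u) u :=
    ((hasDerivAt_rq' 0 (6 * B) (3 * (A * B)) A B u hden).mul (hasDerivAt_id u)).sub
      ((hasDerivAt_rq 0 (6 * B) (3 * (A * B)) A B u hden).const_mul 2)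
  have hd3 : HasDerivAt (fun v => dd3 A B v)
      ((rq'' 0 (-(2 * (A + B))) (-(2 * (A * B))) A B u * u +
        rq' 0 (-(2 * (A + B))) (-(2 * (A * B))) A B u * 1) -
        3 * rq' 0 (-(2 * (A + B))) (-(2 * (A * B))) A B u) u :=
    ((hasDerivAt_rq' 0 (-(2 * (A + B))) (-(2 * (A * B))) A B u hden).mul (hasDerivAt_id u)).sub
      ((hasDerivAt_rq 0 (-(2 * (A + B))) (-(2 * (A * B))) A B u hden).const_mul 3)
  have hnum := ((hd1.mul hdivz).add (hd2.mul (hdivz.pow 2))).add (hd3.mul (hdivz.pow 3))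
  have h := hnum.div (hasDerivAt_id u) hu
  refine h.congr_deriv ?_
  simp only [sUU, ee1, ee2, ee3, dd1, dd2, dd3]
  push_cast
  simp only [Pi.add_apply, Pi.mul_apply, Pi.pow_apply, id]
  field_simp
  ring

/-! ### facts about `gam` -/

lemma gam_nonneg (r : ℝ) : 0 ≤ gam r := by
  unfold gam
  have : Real.sqrt (1 - r ^ 2) ≤ 1 := Real.sqrt_le_one.2 (by nlinarith [sq_nonneg r])
  linarith

lemma gam_le_one (r : ℝ) : gam r ≤ 1 := by
  unfold gam
  have := Real.sqrt_nonneg (1 - r ^ 2)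
  linarith

lemma sq_le_two_gam {r : ℝ} (hr : r ^ 2 ≤ 1) : r ^ 2 ≤ 2 * gam r := by
  unfold gam
  have h1 : Real.sqrt (1 - r ^ 2) ≤ 1 - r ^ 2 / 2 := by
    have h2 : (1 : ℝ) - r ^ 2 ≤ (1 - r ^ 2 / 2) ^ 2 := by nlinarith [sq_nonneg (r ^ 2)]
    calc Real.sqrt (1 - r ^ 2) ≤ Real.sqrt ((1 - r ^ 2 / 2) ^ 2) := Real.sqrt_le_sqrt h2
      _ = 1 - r ^ 2 / 2 := Real.sqrt_sq (by nlinarith)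
  linarith

def gam' (r : ℝ) : ℝ := r / Real.sqrt (1 - r ^ 2)

lemma hasDerivAt_gam {r : ℝ} (hr : r ^ 2 < 1) : HasDerivAt gam (gam' r) r := by
  have hne : (1 : ℝ) - r ^ 2 ≠ 0 := by nlinarith
  have hinner : HasDerivAt (fun x : ℝ => 1 - x ^ 2) (0 - 2 * r ^ 1) r :=
    (hasDerivAt_const r (1:ℝ)).sub (hasDerivAt_pow 2 r)
  have hsq := (Real.hasDerivAt_sqrt hne).comp r hinner
  have h := (hasDerivAt_const r (1:ℝ)).sub hsq
  have hpos : 0 < Real.sqrt (1 - r ^ 2) := Real.sqrt_pos.2 (by nlinarith)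
  refine h.congr_deriv ?_
  simp only [gam', Function.comp]
  field_simp
  ring

lemma gam'_nonneg {r : ℝ} (hr : 0 ≤ r) : 0 ≤ gam' r :=
  div_nonneg hr (Real.sqrt_nonneg _)

lemma gam'_le {r : ℝ} (h0 : 0 ≤ r) (hr : r ≤ 1 / 4) : gam' r ≤ 2 * r := by
  unfold gam'
  have h1 : (1 : ℝ) / 2 ≤ Real.sqrt (1 - r ^ 2) := by
    rw [show (1:ℝ)/2 = Real.sqrt ((1:ℝ)/4) by
      rw [show (1:ℝ)/4 = ((1:ℝ)/2)^2 by norm_num, Real.sqrt_sq]; norm_num]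
    exact Real.sqrt_le_sqrt (by nlinarith)
  rw [div_le_iff₀ (by linarith)]
  nlinarith

/-! ### connection to `Psi` and the test field -/

lemma Psi_eq (βS βΩ h r z : ℝ) :
    Psi βS βΩ h r z = sFun (1 / βS + 2) (1 / βΩ) (h + gam r) z := by
  simp only [Psi, Phi, aS, aP, sFun, rq, den, quad]
  ring

lemma dZ_Psi (βS βΩ h r s : ℝ) :
    dZ (Psi βS βΩ h) r s = wFun (1 / βS + 2) (1 / βΩ) (h + gam r) s := by
  unfold dZ
  rw [show (fun z' => Psi βS βΩ h r z') = fun z' => sFun (1 / βS + 2) (1 / βΩ) (h + gam r) z' from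
    funext fun z => Psi_eq βS βΩ h r z]
  exact (hasDerivAt_sFun_z (1 / βS + 2) (1 / βΩ) (h + gam r) s).deriv

lemma deriv_h_tphi1 (βS βΩ : ℝ) (x1 x2 s : ℝ) {h : ℝ}
    (hu : h + gam (rad (x1, x2, s)) ≠ 0)
    (hden : den (1 / βS + 2) (1 / βΩ) (h + gam (rad (x1, x2, s))) ≠ 0) :
    deriv (fun h' => tphi1 βS βΩ h' (x1, x2, s)) h =
      1 / 2 * (-x1 * wU (1 / βS + 2) (1 / βΩ) (h + gam (rad (x1, x2, s))) s) := by
  set r := rad (x1, x2, s)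
  have heq : (fun h' => tphi1 βS βΩ h' (x1, x2, s)) =
      fun h' => 1 / 2 * (-x1 * wFun (1 / βS + 2) (1 / βΩ) (h' + gam r) s) := by
    funext h'
    simp only [tphi1, dZ_Psi]; rfl
  rw [heq]
  have hW : HasDerivAt (fun h' => wFun (1 / βS + 2) (1 / βΩ) (h' + gam r) s)
      (wU (1 / βS + 2) (1 / βΩ) (h + gam r) s) h := by
    have := (hasDerivAt_wFun_u (1 / βS + 2) (1 / βΩ) s hu hden).comp h
      ((hasDerivAt_id h).add_const (gam r))
    exact this.congr_deriv (mul_one _)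
  exact ((hW.const_mul (-x1)).const_mul (1 / 2)).deriv

lemma deriv_h_tphi2 (βS βΩ : ℝ) (x1 x2 s : ℝ) {h : ℝ}
    (hu : h + gam (rad (x1, x2, s)) ≠ 0)
    (hden : den (1 / βS + 2) (1 / βΩ) (h + gam (rad (x1, x2, s))) ≠ 0) :
    deriv (fun h' => tphi2 βS βΩ h' (x1, x2, s)) h =
      1 / 2 * (-x2 * wU (1 / βS + 2) (1 / βΩ) (h + gam (rad (x1, x2, s))) s) := by
  set r := rad (x1, x2, s)
  have heq : (fun h' => tphi2 βS βΩ h' (x1, x2, s)) =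
      fun h' => 1 / 2 * (-x2 * wFun (1 / βS + 2) (1 / βΩ) (h' + gam r) s) := by
    funext h'
    simp only [tphi2, dZ_Psi]; rfl
  rw [heq]
  have hW : HasDerivAt (fun h' => wFun (1 / βS + 2) (1 / βΩ) (h' + gam r) s)
      (wU (1 / βS + 2) (1 / βΩ) (h + gam r) s) h := by
    have := (hasDerivAt_wFun_u (1 / βS + 2) (1 / βΩ) s hu hden).comp h
      ((hasDerivAt_id h).add_const (gam r))
    exact this.congr_deriv (mul_one _)
  exact ((hW.const_mul (-x2)).const_mul (1 / 2)).deriv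

lemma tphi3_eq (βS βΩ : ℝ) {A B : ℝ} (hA : 0 < A) (hB : 0 < B)
    (hAB : A = 1 / βS + 2 ∧ B = 1 / βΩ) (x1 x2 s : ℝ) {h' : ℝ} (hh' : 0 < h')
    (hr0 : 0 < rad (x1, x2, s)) (hr1 : rad (x1, x2, s) ^ 2 < 1) :
    tphi3 βS βΩ h' (x1, x2, s) =
      sFun A B (h' + gam (rad (x1, x2, s))) s +
        rad (x1, x2, s) * gam' (rad (x1, x2, s)) / 2 *
          sU A B (h' + gam (rad (x1, x2, s))) s := by
  obtain ⟨hA', hB'⟩ := hAB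
  subst hA' hB'
  set r := rad (x1, x2, s) with hrdef
  have hu : (0:ℝ) < h' + gam r := by have := gam_nonneg r; linarith
  have hden : den (1 / βS + 2) (1 / βΩ) (h' + gam r) ≠ 0 := by
    have hApos : (0:ℝ) < 1 / βS + 2 := hA
    exact (den_pos hApos hB hu.le).ne'
  have hS : HasDerivAt (fun r' => sFun (1 / βS + 2) (1 / βΩ) (h' + gam r') s)
      (sU (1 / βS + 2) (1 / βΩ) (h' + gam r) s * gam' r) r := by
    have hshift : HasDerivAt (fun r' => h' + gam r') (gam' r) r :=
      (hasDerivAt_gam hr1).const_add h'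
    exact (hasDerivAt_sFun_u (1 / βS + 2) (1 / βΩ) s hu.ne' hden).comp r hshift
  have hprod := (hasDerivAt_pow 2 r).mul hS
  have hfun : (fun r' => r' ^ 2 * Psi βS βΩ h' r' s) =
      fun r' => r' ^ 2 * sFun (1 / βS + 2) (1 / βΩ) (h' + gam r') s :=
    funext fun r' => by rw [Psi_eq]
  have hderiv : deriv (fun r' => r' ^ 2 * Psi βS βΩ h' r' s) r =
      2 * r ^ 1 * sFun (1 / βS + 2) (1 / βΩ) (h' + gam r) s +
        r ^ 2 * (sU (1 / βS + 2) (1 / βΩ) (h' + gam r) s * gam' r) := by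
    rw [hfun]
    exact (hprod.congr_deriv (by simp)).deriv
  simp only [tphi3]
  rw [show rad (x1, x2, s) = r from rfl, hderiv]
  field_simp

lemma deriv_h_tphi3 (βS βΩ : ℝ) {A B : ℝ} (hA : 0 < A) (hB : 0 < B)
    (hAB : A = 1 / βS + 2 ∧ B = 1 / βΩ) (x1 x2 s : ℝ) {h : ℝ} (hh : 0 < h)
    (hr0 : 0 < rad (x1, x2, s)) (hr1 : rad (x1, x2, s) ^ 2 < 1) :
    deriv (fun h' => tphi3 βS βΩ h' (x1, x2, s)) h =
      sU A B (h + gam (rad (x1, x2, s))) s +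
        rad (x1, x2, s) * gam' (rad (x1, x2, s)) / 2 *
          sUU A B (h + gam (rad (x1, x2, s))) s := by
  set r := rad (x1, x2, s) with hrdef
  have heq : (fun h' => tphi3 βS βΩ h' (x1, x2, s)) =ᶠ[nhds h]
      fun h' => sFun A B (h' + gam r) s + r * gam' r / 2 * sU A B (h' + gam r) s := by
    filter_upwards [Ioi_mem_nhds hh] with h' hh'
    exact tphi3_eq βS βΩ hA hB hAB x1 x2 s hh' hr0 hr1
  rw [heq.deriv_eq]
  have hu : (0:ℝ) < h + gam r := by have := gam_nonneg r; linarith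
  have hden : den A B (h + gam r) ≠ 0 := (den_pos hA hB hu.le).ne'
  have hshift : HasDerivAt (fun h' : ℝ => h' + gam r) 1 h := (hasDerivAt_id h).add_const (gam r)
  have h1 : HasDerivAt (fun h' => sFun A B (h' + gam r) s) (sU A B (h + gam r) s) h := by
    have := (hasDerivAt_sFun_u A B s hu.ne' hden).comp h hshift
    exact this.congr_deriv (mul_one _)
  have h2 : HasDerivAt (fun h' => sU A B (h' + gam r) s) (sUU A B (h + gam r) s) h := by
    have := (hasDerivAt_sU_u A B s hu.ne' hden).comp h hshift
    exact this.congr_deriv (mul_one _)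
  exact (h1.add (h2.const_mul (r * gam' r / 2))).deriv

/-! ### uniform bounds on the coefficient functions -/

lemma abs_quad_le {a b c t : ℝ} (h0 : 0 ≤ t) (h1 : t ≤ 1) :
    |a + b * t + c * t ^ 2| ≤ |a| + |b| + |c| := by
  have h2 := abs_add_three a (b * t) (c * t ^ 2)
  have ht2 : t ^ 2 ≤ 1 := by nlinarith
  have hb : |b * t| ≤ |b| := by
    rw [abs_mul, abs_of_nonneg h0]
    nlinarith [abs_nonneg b]
  have hc : |c * t ^ 2| ≤ |c| := by
    rw [abs_mul, abs_of_nonneg (by positivity : (0:ℝ) ≤ t ^ 2)]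
    nlinarith [abs_nonneg c]
  linarith

lemma abs_cub_le {a b c t : ℝ} (h0 : 0 ≤ t) (h1 : t ≤ 1) :
    |a * t + b * t ^ 2 + c * t ^ 3| ≤ |a| + |b| + |c| := by
  have h2 := abs_add_three (a * t) (b * t ^ 2) (c * t ^ 3)
  have ht2 : t ^ 2 ≤ 1 := by nlinarith
  have ht3 : t ^ 3 ≤ 1 := by nlinarith
  have ha : |a * t| ≤ |a| := by
    rw [abs_mul, abs_of_nonneg h0]; nlinarith [abs_nonneg a]
  have hb : |b * t ^ 2| ≤ |b| := by
    rw [abs_mul, abs_of_nonneg (by positivity : (0:ℝ) ≤ t ^ 2)]; nlinarith [abs_nonneg b]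
  have hc : |c * t ^ 3| ≤ |c| := by
    rw [abs_mul, abs_of_nonneg (by positivity : (0:ℝ) ≤ t ^ 3)]; nlinarith [abs_nonneg c]
  linarith

lemma exists_M (A B : ℝ) (hA : 0 < A) (hB : 0 < B) :
    ∃ M : ℝ, 1 ≤ M ∧ ∀ u s : ℝ, u ∈ Set.Ioc (0:ℝ) (3/2) → s ∈ Set.Icc 0 u →
      |wU A B u s| ≤ M / u ^ 2 ∧ |sU A B u s| ≤ M / u ∧ |sUU A B u s| ≤ M / u ^ 2 := by
  set S : Set ℝ := Set.Icc (0:ℝ) (3/2) with hS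
  have hden : ∀ u ∈ S, den A B u ≠ 0 := fun u hu => (den_pos hA hB hu.1).ne'
  have hcd1 : ContinuousOn (fun u => dd1 A B u) S := by
    unfold dd1
    exact ((continuousOn_rq' _ _ _ _ _ hden).mul continuousOn_id).sub (continuousOn_rq _ _ _ _ _ hden)
  have hcd2 : ContinuousOn (fun u => dd2 A B u) S := by
    unfold dd2
    exact ((continuousOn_rq' _ _ _ _ _ hden).mul continuousOn_id).sub
      ((continuousOn_rq _ _ _ _ _ hden).const_smul (2:ℝ))
  have hcd3 : ContinuousOn (fun u => dd3 A B u) S := by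
    unfold dd3
    exact ((continuousOn_rq' _ _ _ _ _ hden).mul continuousOn_id).sub
      ((continuousOn_rq _ _ _ _ _ hden).const_smul (3:ℝ))
  have hce1 : ContinuousOn (fun u => ee1 A B u) S := by
    unfold ee1
    exact (((continuousOn_rq'' _ _ _ _ _ hden).mul (continuous_pow 2).continuousOn).sub
      (((continuousOn_rq' _ _ _ _ _ hden).const_smul (2:ℝ)).mul continuousOn_id)).add
      ((continuousOn_rq _ _ _ _ _ hden).const_smul (2:ℝ))
  have hce2 : ContinuousOn (fun u => ee2 A B u) S := by
    unfold ee2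
    exact (((continuousOn_rq'' _ _ _ _ _ hden).mul (continuous_pow 2).continuousOn).sub
      (((continuousOn_rq' _ _ _ _ _ hden).const_smul (4:ℝ)).mul continuousOn_id)).add
      ((continuousOn_rq _ _ _ _ _ hden).const_smul (6:ℝ))
  have hce3 : ContinuousOn (fun u => ee3 A B u) S := by
    unfold ee3
    exact (((continuousOn_rq'' _ _ _ _ _ hden).mul (continuous_pow 2).continuousOn).sub
      (((continuousOn_rq' _ _ _ _ _ hden).const_smul (6:ℝ)).mul continuousOn_id)).add
      ((continuousOn_rq _ _ _ _ _ hden).const_smul (12:ℝ))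
  have hF : ContinuousOn (fun u => |dd1 A B u| + 2 * |dd2 A B u| + 3 * |dd3 A B u| +
      |ee1 A B u| + |ee2 A B u| + |ee3 A B u|) S := by
    exact ((((hcd1.abs.add ((hcd2.abs).const_smul (2:ℝ))).add
      ((hcd3.abs).const_smul (3:ℝ))).add hce1.abs).add hce2.abs).add hce3.abs
  obtain ⟨M0, hM0⟩ := isCompact_Icc.exists_bound_of_continuousOn hF
  refine ⟨max M0 1, le_max_right _ _, ?_⟩
  intro u s hu hs
  have hu0 : 0 < u := hu.1
  have ht0 : 0 ≤ s / u := div_nonneg hs.1 hu0.le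
  have ht1 : s / u ≤ 1 := (div_le_one hu0).2 hs.2
  have hmem : u ∈ S := ⟨hu0.le, hu.2⟩
  have hFb := hM0 u hmem
  rw [Real.norm_eq_abs] at hFb
  have hd1 := abs_nonneg (dd1 A B u); have hd2 := abs_nonneg (dd2 A B u)
  have hd3 := abs_nonneg (dd3 A B u); have he1 := abs_nonneg (ee1 A B u)
  have he2 := abs_nonneg (ee2 A B u); have he3 := abs_nonneg (ee3 A B u)
  have hFnn : (0:ℝ) ≤ |dd1 A B u| + 2 * |dd2 A B u| + 3 * |dd3 A B u| +
      |ee1 A B u| + |ee2 A B u| + |ee3 A B u| := by linarith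
  rw [abs_of_nonneg hFnn] at hFb
  have hM1 : |dd1 A B u| + 2 * |dd2 A B u| + 3 * |dd3 A B u| + |ee1 A B u| + |ee2 A B u| +
      |ee3 A B u| ≤ max M0 1 := le_trans hFb (le_max_left _ _)
  refine ⟨?_, ?_, ?_⟩
  · simp only [wU]
    rw [abs_div, abs_of_pos (pow_pos hu0 2)]
    apply (div_le_div_iff_of_pos_right (pow_pos hu0 2)).2
    calc |dd1 A B u + 2 * dd2 A B u * (s / u) + 3 * dd3 A B u * (s / u) ^ 2| ≤
        |dd1 A B u| + |2 * dd2 A B u| + |3 * dd3 A B u| := abs_quad_le ht0 ht1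
      _ = |dd1 A B u| + 2 * |dd2 A B u| + 3 * |dd3 A B u| := by
        rw [abs_mul, abs_mul, abs_two, abs_of_nonneg (by norm_num : (0:ℝ) ≤ 3)]
      _ ≤ max M0 1 := by linarith
  · simp only [sU]
    rw [abs_div, abs_of_pos hu0]
    apply (div_le_div_iff_of_pos_right hu0).2
    calc |dd1 A B u * (s / u) + dd2 A B u * (s / u) ^ 2 + dd3 A B u * (s / u) ^ 3| ≤
        |dd1 A B u| + |dd2 A B u| + |dd3 A B u| := abs_cub_le ht0 ht1
      _ ≤ max M0 1 := by linarith
  · simp only [sUU]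
    rw [abs_div, abs_of_pos (pow_pos hu0 2)]
    apply (div_le_div_iff_of_pos_right (pow_pos hu0 2)).2
    calc |ee1 A B u * (s / u) + ee2 A B u * (s / u) ^ 2 + ee3 A B u * (s / u) ^ 3| ≤
        |ee1 A B u| + |ee2 A B u| + |ee3 A B u| := abs_cub_le ht0 ht1
      _ ≤ max M0 1 := by linarith

/-! ### the pointwise bound on the inner integral -/

set_option maxHeartbeats 1600000 in
lemma inner_bound (δ βS βΩ : ℝ) (hδ : δ ∈ Set.Ioo (0:ℝ) (1/4)) (hβS : 0 < βS) (hβΩ : 0 < βΩ) :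
    ∃ K : ℝ, 1 ≤ K ∧ ∀ h ∈ Set.Ioo (0:ℝ) (1/4), ∀ i : Fin 3, ∀ x1 x2 z : ℝ,
      0 < z → z < h + gam (rad (x1, x2, z)) → rad (x1, x2, z) < δ → 0 < rad (x1, x2, z) →
      |∫ s in z..(h + gam (rad (x1, x2, z))), deriv (fun h' => tcmp βS βΩ h' i (x1, x2, s)) h| ≤
        K * (1 + rad (x1, x2, z) / (h + gam (rad (x1, x2, z)))) := by
  have hA : (0:ℝ) < 1 / βS + 2 := by positivity
  have hB : (0:ℝ) < 1 / βΩ := by positivity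
  set A := 1 / βS + 2
  set B := 1 / βΩ
  obtain ⟨M, hM1, hM⟩ := exists_M A B hA hB
  refine ⟨3 * M, by linarith, ?_⟩
  intro h hh i x1 x2 z hz hzu hrδ hr0
  set r := rad (x1, x2, z) with hrdef
  set u := h + gam r with hudef
  have hg0 := gam_nonneg r
  have hg1 := gam_le_one r
  have hu0 : 0 < u := by rw [hudef]; linarith [hh.1]
  have hule : u ≤ 3 / 2 := by rw [hudef]; linarith [hh.2]
  have huIoc : u ∈ Set.Ioc (0:ℝ) (3/2) := ⟨hu0, hule⟩
  have hden : den A B u ≠ 0 := (den_pos hA hB hu0.le).ne'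
  have hr14 : r ≤ 1 / 4 := le_of_lt (lt_trans hrδ hδ.2)
  have hr1 : r ^ 2 < 1 := by nlinarith
  have hrsq : r ^ 2 ≤ 2 * u := by
    have := sq_le_two_gam hr1.le
    rw [hudef]; linarith [hh.1]
  have habs_x1 : |x1| ≤ r := by
    rw [hrdef]; unfold rad
    rw [← Real.sqrt_sq_eq_abs]
    exact Real.sqrt_le_sqrt (by nlinarith [sq_nonneg x2])
  have habs_x2 : |x2| ≤ r := by
    rw [hrdef]; unfold rad
    rw [← Real.sqrt_sq_eq_abs]
    exact Real.sqrt_le_sqrt (by nlinarith [sq_nonneg x1])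
  have hsub : ∀ s ∈ Set.uIoc z u, s ∈ Set.Icc 0 u := by
    intro s hs
    rw [Set.uIoc_of_le hzu.le] at hs
    exact ⟨le_of_lt (lt_trans hz hs.1), hs.2⟩
  have huz : |u - z| ≤ u := by
    rw [abs_of_pos (by linarith : (0:ℝ) < u - z)]; linarith
  have hru : 0 ≤ r / u := div_nonneg hr0.le hu0.le
  have hfin : ∀ Cb : ℝ, 0 ≤ Cb →
      (∀ s ∈ Set.uIoc z u, ‖deriv (fun h' => tcmp βS βΩ h' i (x1, x2, s)) h‖ ≤ Cb) →
      Cb * u ≤ 3 * M * (1 + r / u) →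
      |∫ s in z..(h + gam (rad (x1, x2, z))), deriv (fun h' => tcmp βS βΩ h' i (x1, x2, s)) h| ≤
        3 * M * (1 + r / u) := by
    intro Cb hCb0 hCb hCu
    have h1 := intervalIntegral.norm_integral_le_of_norm_le_const hCb
    rw [Real.norm_eq_abs] at h1
    calc |∫ s in z..u, deriv (fun h' => tcmp βS βΩ h' i (x1, x2, s)) h| ≤ Cb * |u - z| := h1
      _ ≤ Cb * u := mul_le_mul_of_nonneg_left huz hCb0
      _ ≤ 3 * M * (1 + r / u) := hCu
  have hi3 : i = 0 ∨ i = 1 ∨ i = 2 := by omega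
  rcases hi3 with hi | hi | hi <;> subst hi
  · -- first component
    refine hfin (r / 2 * (M / u ^ 2)) (by positivity) ?_ ?_
    · intro s hs
      have hsI := hsub s hs
      show |deriv (fun h' => tcmp βS βΩ h' (0 : Fin 3) (x1, x2, s)) h| ≤ r / 2 * (M / u ^ 2)
      have hder : deriv (fun h' => tcmp βS βΩ h' (0 : Fin 3) (x1, x2, s)) h =
          1 / 2 * (-x1 * wU A B u s) := by
        have heq : (fun h' => tcmp βS βΩ h' (0 : Fin 3) (x1, x2, s)) =
            fun h' => tphi1 βS βΩ h' (x1, x2, s) := rfl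
        rw [heq]
        exact deriv_h_tphi1 βS βΩ x1 x2 s hu0.ne' hden
      rw [hder, abs_mul, abs_mul, abs_neg,
        abs_of_pos (by norm_num : (0:ℝ) < 1/2)]
      have hw := (hM u s huIoc hsI).1
      calc 1 / 2 * (|x1| * |wU A B u s|) ≤ 1 / 2 * (r * (M / u ^ 2)) := by
            apply mul_le_mul_of_nonneg_left _ (by norm_num)
            exact mul_le_mul habs_x1 hw (abs_nonneg _) hr0.le
        _ = r / 2 * (M / u ^ 2) := by ring
    · have hid : r / 2 * (M / u ^ 2) * u = M / 2 * (r / u) := by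
        field_simp
      rw [hid]
      nlinarith
  · -- second component
    refine hfin (r / 2 * (M / u ^ 2)) (by positivity) ?_ ?_
    · intro s hs
      have hsI := hsub s hs
      show |deriv (fun h' => tcmp βS βΩ h' (1 : Fin 3) (x1, x2, s)) h| ≤ r / 2 * (M / u ^ 2)
      have hder : deriv (fun h' => tcmp βS βΩ h' (1 : Fin 3) (x1, x2, s)) h =
          1 / 2 * (-x2 * wU A B u s) := by
        have heq : (fun h' => tcmp βS βΩ h' (1 : Fin 3) (x1, x2, s)) =
            fun h' => tphi2 βS βΩ h' (x1, x2, s) := rfl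
        rw [heq]
        exact deriv_h_tphi2 βS βΩ x1 x2 s hu0.ne' hden
      rw [hder, abs_mul, abs_mul, abs_neg,
        abs_of_pos (by norm_num : (0:ℝ) < 1/2)]
      have hw := (hM u s huIoc hsI).1
      calc 1 / 2 * (|x2| * |wU A B u s|) ≤ 1 / 2 * (r * (M / u ^ 2)) := by
            apply mul_le_mul_of_nonneg_left _ (by norm_num)
            exact mul_le_mul habs_x2 hw (abs_nonneg _) hr0.le
        _ = r / 2 * (M / u ^ 2) := by ring
    · have hid : r / 2 * (M / u ^ 2) * u = M / 2 * (r / u) := by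
        field_simp
      rw [hid]
      nlinarith
  · -- third component
    have hc0 : 0 ≤ r * gam' r / 2 := by
      have := gam'_nonneg hr0.le
      positivity
    have hcle : r * gam' r / 2 ≤ 2 * u := by
      have h1 := gam'_le hr0.le hr14
      nlinarith [gam'_nonneg hr0.le]
    refine hfin (M / u + r * gam' r / 2 * (M / u ^ 2)) (by positivity) ?_ ?_
    · intro s hs
      have hsI := hsub s hs
      show |deriv (fun h' => tcmp βS βΩ h' (2 : Fin 3) (x1, x2, s)) h| ≤
        M / u + r * gam' r / 2 * (M / u ^ 2)
      have hder : deriv (fun h' => tcmp βS βΩ h' (2 : Fin 3) (x1, x2, s)) h =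
          sU A B u s + r * gam' r / 2 * sUU A B u s := by
        have heq : (fun h' => tcmp βS βΩ h' (2 : Fin 3) (x1, x2, s)) =
            fun h' => tphi3 βS βΩ h' (x1, x2, s) := rfl
        rw [heq]
        exact deriv_h_tphi3 βS βΩ hA hB ⟨rfl, rfl⟩ x1 x2 s hh.1 hr0 hr1
      rw [hder]
      have hsu := (hM u s huIoc hsI).2.1
      have hsuu := (hM u s huIoc hsI).2.2
      calc |sU A B u s + r * gam' r / 2 * sUU A B u s| ≤
          |sU A B u s| + |r * gam' r / 2 * sUU A B u s| := abs_add_le _ _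
        _ = |sU A B u s| + r * gam' r / 2 * |sUU A B u s| := by
            rw [abs_mul, abs_of_nonneg hc0]
        _ ≤ M / u + r * gam' r / 2 * (M / u ^ 2) := by
            have := mul_le_mul_of_nonneg_left hsuu hc0
            linarith
    · have h2 : r * gam' r / 2 * (M / u ^ 2) ≤ 2 * u * (M / u ^ 2) :=
        mul_le_mul_of_nonneg_right hcle (by positivity)
      have h3 : 2 * u * (M / u ^ 2) = 2 * (M / u) := by
        field_simp
      have h4 : (M / u + r * gam' r / 2 * (M / u ^ 2)) * u ≤ 3 * (M / u) * u := by
        nlinarith [div_nonneg (by linarith : (0:ℝ) ≤ M) hu0.le]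
      have h5 : 3 * (M / u) * u = 3 * M := by field_simp
      calc (M / u + r * gam' r / 2 * (M / u ^ 2)) * u ≤ 3 * M := by rw [← h5]; exact h4
        _ ≤ 3 * M * (1 + r / u) := by nlinarith

/-! ### integral of the majorant over the cusp region -/

lemma omg_open (h δ : ℝ) : IsOpen (Omg h δ) := by
  have hrad : Continuous rad := by
    unfold rad
    exact (continuous_fst.pow 2 |>.add ((continuous_fst.comp continuous_snd).pow 2)).sqrt
  have hgam : Continuous gam := by
    unfold gam
    exact continuous_const.sub ((continuous_const.sub (continuous_id.pow 2)).sqrt)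
  have h1 : IsOpen {x : ℝ × ℝ × ℝ | 0 < x.2.2} :=
    isOpen_lt continuous_const (continuous_snd.comp continuous_snd)
  have h2 : IsOpen {x : ℝ × ℝ × ℝ | x.2.2 < h + gam (rad x)} :=
    isOpen_lt (continuous_snd.comp continuous_snd) (continuous_const.add (hgam.comp hrad))
  have h3 : IsOpen {x : ℝ × ℝ × ℝ | rad x < δ} := isOpen_lt hrad continuous_const
  have : Omg h δ = ({x : ℝ × ℝ × ℝ | 0 < x.2.2} ∩ {x | x.2.2 < h + gam (rad x)}) ∩
      {x | rad x < δ} := by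
    ext x; simp [Omg]; tauto
  rw [this]
  exact (h1.inter h2).inter h3

lemma continuous_rad : Continuous rad := by
  unfold rad
  exact (continuous_fst.pow 2 |>.add ((continuous_fst.comp continuous_snd).pow 2)).sqrt

lemma continuous_gam : Continuous gam := by
  unfold gam
  exact continuous_const.sub ((continuous_const.sub (continuous_id.pow 2)).sqrt)

lemma rad_nonneg (x : ℝ × ℝ × ℝ) : 0 ≤ rad x := Real.sqrt_nonneg _

lemma abs_fst_le_rad (x : ℝ × ℝ × ℝ) : |x.1| ≤ rad x := by
  unfold rad
  rw [← Real.sqrt_sq_eq_abs]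
  exact Real.sqrt_le_sqrt (by nlinarith [sq_nonneg x.2.1])

lemma abs_snd_le_rad (x : ℝ × ℝ × ℝ) : |x.2.1| ≤ rad x := by
  unfold rad
  rw [← Real.sqrt_sq_eq_abs]
  exact Real.sqrt_le_sqrt (by nlinarith [sq_nonneg x.1])

set_option maxHeartbeats 1000000 in
lemma g_bound (h δ K : ℝ) (hδ0 : 0 < δ) (hδ4 : δ < 1/4) (hh0 : 0 < h) (hh4 : h < 1/4)
    (hK : 1 ≤ K) :
    IntegrableOn (fun x => 2 * K ^ 2 * (1 + (rad x / (h + gam (rad x))) ^ 2)) (Omg h δ) volume ∧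
      (∫ x in Omg h δ, 2 * K ^ 2 * (1 + (rad x / (h + gam (rad x))) ^ 2)) ≤ (2 * K) ^ 2 := by
  set g : ℝ × ℝ × ℝ → ℝ := fun x => 2 * K ^ 2 * (1 + (rad x / (h + gam (rad x))) ^ 2) with hgdef
  have hu0 : ∀ x : ℝ × ℝ × ℝ, 0 < h + gam (rad x) := fun x => by
    have := gam_nonneg (rad x); linarith
  have hgcont : Continuous g := by
    apply continuous_const.mul
    apply continuous_const.add
    apply Continuous.pow
    exact continuous_rad.div (continuous_const.add (continuous_gam.comp continuous_rad))
      fun x => (hu0 x).ne'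
  have hOmgMeas : MeasurableSet (Omg h δ) := (omg_open h δ).measurableSet
  have hOmgSub : Omg h δ ⊆ (Set.Icc (-1:ℝ) 1) ×ˢ ((Set.Icc (-1:ℝ) 1) ×ˢ (Set.Icc (0:ℝ) (3/2))) := by
    intro x hx
    obtain ⟨h1, h2, h3⟩ := hx
    have hr1 : rad x < 1 := lt_trans h3 (by linarith)
    have ha1 := abs_le.1 (le_of_lt (lt_of_le_of_lt (abs_fst_le_rad x) hr1))
    have ha2 := abs_le.1 (le_of_lt (lt_of_le_of_lt (abs_snd_le_rad x) hr1))
    have hg1 := gam_le_one (rad x)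
    exact ⟨⟨ha1.1, ha1.2⟩, ⟨ha2.1, ha2.2⟩, h1.le, by linarith⟩
  have hvol : volume (Omg h δ) < ⊤ := by
    apply lt_of_le_of_lt (measure_mono hOmgSub)
    exact (isCompact_Icc.prod (isCompact_Icc.prod isCompact_Icc)).measure_lt_top
  -- boundedness of g on Omg (h fixed)
  have hgOn : IntegrableOn g (Omg h δ) volume := by
    apply Measure.integrableOn_of_bounded hvol.ne hgcont.aestronglyMeasurable
      (M := 2 * K ^ 2 * (1 + (δ / h) ^ 2))
    filter_upwards [ae_restrict_mem hOmgMeas] with x hx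
    obtain ⟨h1, h2, h3⟩ := hx
    simp only [hgdef]
    have hru : rad x / (h + gam (rad x)) ≤ δ / h := by
      apply div_le_div₀ hδ0.le h3.le hh0
      have := gam_nonneg (rad x); linarith
    have hru0 : 0 ≤ rad x / (h + gam (rad x)) := div_nonneg (rad_nonneg x) (hu0 x).le
    rw [Real.norm_eq_abs, abs_of_nonneg (by positivity)]
    have : (rad x / (h + gam (rad x))) ^ 2 ≤ (δ / h) ^ 2 := by nlinarith
    nlinarith [sq_nonneg K]
  refine ⟨hgOn, ?_⟩
  -- now the Fubini computation
  set G : ℝ × ℝ × ℝ → ℝ := (Omg h δ).indicator g with hGdef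
  have hGint : Integrable G volume := (integrable_indicator_iff hOmgMeas).2 hgOn
  have hGnn : ∀ y, 0 ≤ G y := by
    intro y
    apply Set.indicator_nonneg
    intro x _
    positivity
  -- the inner (vertical) integral is bounded by 7 K^2 and supported in the square
  have hinner : ∀ x1 x2 : ℝ, (∫ z, G (x1, x2, z)) ≤
      (Set.Icc (-δ) δ).indicator (fun _ => 7 * K ^ 2) x2 ∧ 0 ≤ ∫ z, G (x1, x2, z) := by
    intro x1 x2
    constructor
    · set r : ℝ := rad (x1, x2, 0) with hrdef
      have hreq : ∀ z : ℝ, rad (x1, x2, z) = r := fun z => rfl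
      by_cases hr : r < δ
      · have hu0' : 0 < h + gam r := by have := gam_nonneg r; linarith
        have hfun : (fun z => G (x1, x2, z)) =
            (Set.Ioo (0:ℝ) (h + gam r)).indicator
              (fun _ => 2 * K ^ 2 * (1 + (r / (h + gam r)) ^ 2)) := by
          funext z
          by_cases hz : z ∈ Set.Ioo (0:ℝ) (h + gam r)
          · rw [Set.indicator_of_mem hz]
            have hmem : (x1, x2, z) ∈ Omg h δ := ⟨hz.1, hz.2, hr⟩
            rw [hGdef, Set.indicator_of_mem hmem]
            rfl
          · rw [Set.indicator_of_notMem hz]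
            have hmem : (x1, x2, z) ∉ Omg h δ := by
              intro hc
              exact hz ⟨hc.1, hc.2.1⟩
            rw [hGdef, Set.indicator_of_notMem hmem]
        rw [hfun, integral_indicator_const _ measurableSet_Ioo, Real.volume_real_Ioo_of_le (by linarith), smul_eq_mul]
        have hx2 : x2 ∈ Set.Icc (-δ) δ := by
          have := abs_le.1 (lt_of_le_of_lt (abs_snd_le_rad (x1, x2, 0)) hr).le
          exact ⟨this.1, this.2⟩
        rw [Set.indicator_of_mem hx2]
        have hrsq : r ^ 2 ≤ 2 * (h + gam r) := by
          have h1 : r ^ 2 ≤ 1 := by nlinarith [rad_nonneg (x1, x2, 0)]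
          have := sq_le_two_gam h1
          linarith
        have hules : h + gam r ≤ 3 / 2 := by have := gam_le_one r; linarith
        have hid : (h + gam r - 0) * (2 * K ^ 2 * (1 + (r / (h + gam r)) ^ 2)) =
            2 * K ^ 2 * (h + gam r) + 2 * K ^ 2 * (r ^ 2 / (h + gam r)) := by
          field_simp
          ring
        rw [hid]
        have hdiv : r ^ 2 / (h + gam r) ≤ 2 := by
          rw [div_le_iff₀ hu0']
          linarith
        nlinarith [sq_nonneg K]
      · have hfun : (fun z => G (x1, x2, z)) = fun _ => (0:ℝ) := by
          funext z
          have hmem : (x1, x2, z) ∉ Omg h δ := fun hc => hr hc.2.2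
          rw [hGdef, Set.indicator_of_notMem hmem]
        rw [hfun]
        simp only [MeasureTheory.integral_const, smul_eq_mul, mul_zero]
        exact Set.indicator_nonneg (fun _ _ => by positivity) x2
    · exact integral_nonneg (fun z => hGnn _)
  -- integrate in x2
  have hB2int : Integrable ((Set.Icc (-δ) δ).indicator (fun _ => 7 * K ^ 2)) (volume : Measure ℝ) :=
    (integrableOn_const measure_Icc_lt_top.ne).integrable_indicator measurableSet_Icc
  have hB2val : (∫ x2 : ℝ, (Set.Icc (-δ) δ).indicator (fun _ => 7 * K ^ 2) x2) = 2 * δ * (7 * K ^ 2) := by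
    rw [integral_indicator_const _ measurableSet_Icc, Real.volume_real_Icc_of_le (by linarith), smul_eq_mul]
    ring_nf
  -- the middle (x2, z) integral
  have hmid : ∀ x1 : ℝ, Integrable (fun y : ℝ × ℝ => G (x1, y)) volume →
      (∫ y : ℝ × ℝ, G (x1, y)) ≤ (Set.Icc (-δ) δ).indicator (fun _ => 2 * δ * (7 * K ^ 2)) x1 := by
    intro x1 hx1int
    by_cases hx1 : x1 ∈ Set.Icc (-δ) δ
    · rw [Set.indicator_of_mem hx1]
      have hx1int' : Integrable (fun y : ℝ × ℝ => G (x1, y))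
          ((volume : Measure ℝ).prod (volume : Measure ℝ)) := by
        rwa [← Measure.volume_eq_prod]
      rw [Measure.volume_eq_prod, integral_prod _ hx1int']
      have hmarg2 : Integrable (fun x2 => ∫ z, G (x1, x2, z)) (volume : Measure ℝ) :=
        hx1int'.integral_prod_left
      calc (∫ x2, ∫ z, G (x1, x2, z)) ≤
          ∫ x2 : ℝ, (Set.Icc (-δ) δ).indicator (fun _ => 7 * K ^ 2) x2 :=
            integral_mono_ae hmarg2 hB2int (Filter.Eventually.of_forall fun x2 => (hinner x1 x2).1)
        _ = 2 * δ * (7 * K ^ 2) := hB2val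
    · have hzero : (fun y : ℝ × ℝ => G (x1, y)) = fun _ => (0:ℝ) := by
        funext y
        have hmem : (x1, y) ∉ Omg h δ := by
          intro hc
          have := lt_of_le_of_lt (abs_fst_le_rad (x1, y)) hc.2.2
          exact hx1 ⟨(abs_le.1 this.le).1, (abs_le.1 this.le).2⟩
        rw [hGdef, Set.indicator_of_notMem hmem]
      rw [hzero, Set.indicator_of_notMem hx1]
      simp
  -- assemble
  have hGint' : Integrable G ((volume : Measure ℝ).prod (volume : Measure (ℝ × ℝ))) := by
    rwa [← Measure.volume_eq_prod]
  have hB1int : Integrable ((Set.Icc (-δ) δ).indicator (fun _ => 2 * δ * (7 * K ^ 2)))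
      (volume : Measure ℝ) :=
    (integrableOn_const measure_Icc_lt_top.ne).integrable_indicator measurableSet_Icc
  have hB1val : (∫ x1 : ℝ, (Set.Icc (-δ) δ).indicator (fun _ => 2 * δ * (7 * K ^ 2)) x1) =
      2 * δ * (2 * δ * (7 * K ^ 2)) := by
    rw [integral_indicator_const _ measurableSet_Icc, Real.volume_real_Icc_of_le (by linarith), smul_eq_mul]
    ring_nf
  have hmain : (∫ y, G y) ≤ 2 * δ * (2 * δ * (7 * K ^ 2)) := by
    rw [Measure.volume_eq_prod, integral_prod _ hGint']
    have hmarg : Integrable (fun x1 => ∫ y : ℝ × ℝ, G (x1, y)) (volume : Measure ℝ) :=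
      hGint'.integral_prod_left
    calc (∫ x1, ∫ y : ℝ × ℝ, G (x1, y)) ≤
        ∫ x1 : ℝ, (Set.Icc (-δ) δ).indicator (fun _ => 2 * δ * (7 * K ^ 2)) x1 := by
          apply integral_mono_ae hmarg hB1int
          filter_upwards [hGint'.prod_right_ae] with x1 hx1int
          exact hmid x1 (by rwa [Measure.volume_eq_prod])
      _ = 2 * δ * (2 * δ * (7 * K ^ 2)) := hB1val
  rw [← MeasureTheory.integral_indicator hOmgMeas]
  calc (∫ y, G y) ≤ 2 * δ * (2 * δ * (7 * K ^ 2)) := hmain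
    _ ≤ (2 * K) ^ 2 := by
      have hd2 : δ ^ 2 < 1 / 16 := by nlinarith
      have hK2 : 1 ≤ K ^ 2 := by nlinarith
      nlinarith [sq_nonneg K, sq_nonneg δ]

end CuspAux


/-- Estimate (A.5)/(3.17) (slip case): for each component `i`, the vertical primitive of
the `h`-derivative of the test field satisfies
`∫_{Ω_{h,δ}} |∫_{x₃}^{h+γ_s(r)} ∂_h φ̃_h^i(x₁,x₂,s) ds|² dx ≤ C²`. -/
theorem tphi_h_derivative_primitive_L2_bound (δ βS βΩ : ℝ)
    (hδ : δ ∈ Set.Ioo (0 : ℝ) (1 / 4)) (hβS : 0 < βS) (hβΩ : 0 < βΩ) :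
    ∃ C : ℝ, 0 < C ∧ ∀ h ∈ Set.Ioo (0 : ℝ) (1 / 4), ∀ i : Fin 3,
      (∫ x in Omg h δ,
          (∫ s in x.2.2..(h + gam (rad x)),
            deriv (fun h' => tcmp βS βΩ h' i (x.1, x.2.1, s)) h) ^ 2) ≤
        C ^ 2 := by
  obtain ⟨K, hK1, hK⟩ := CuspAux.inner_bound δ βS βΩ hδ hβS hβΩ
  refine ⟨2 * K, by linarith, ?_⟩
  intro h hh i
  set g : ℝ × ℝ × ℝ → ℝ := fun x => 2 * K ^ 2 * (1 + (rad x / (h + gam (rad x))) ^ 2) with hgdef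
  obtain ⟨hgOn, hgval⟩ := CuspAux.g_bound h δ K hδ.1 hδ.2 hh.1 hh.2 hK1
  have hOmgMeas : MeasurableSet (Omg h δ) := (CuspAux.omg_open h δ).measurableSet
  set f : ℝ × ℝ × ℝ → ℝ := fun x =>
    (∫ s in x.2.2..(h + gam (rad x)), deriv (fun h' => tcmp βS βΩ h' i (x.1, x.2.1, s)) h) ^ 2
    with hfdef
  -- almost everywhere, the first coordinate is nonzero
  have hax : ∀ᵐ x : ℝ × ℝ × ℝ ∂volume, x.1 ≠ 0 := by
    have hnull : volume {x : ℝ × ℝ × ℝ | x.1 = 0} = 0 := by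
      have hset : {x : ℝ × ℝ × ℝ | x.1 = 0} =
          ({(0:ℝ)} : Set ℝ) ×ˢ (Set.univ : Set (ℝ × ℝ)) := by
        ext x
        simp only [Set.mem_setOf_eq, Set.mem_prod, Set.mem_singleton_iff, Set.mem_univ, and_true]
      rw [hset, Measure.volume_eq_prod, Measure.prod_prod, Real.volume_singleton, zero_mul]
    rw [ae_iff]
    convert hnull using 2
    simp [not_not]
  have hle : ∀ᵐ x ∂(volume.restrict (Omg h δ)), f x ≤ g x := by
    filter_upwards [ae_restrict_mem hOmgMeas, ae_restrict_of_ae hax] with x hx hx1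
    obtain ⟨h1, h2, h3⟩ := hx
    have hr0 : 0 < rad x := by
      apply Real.sqrt_pos.2
      have h4 : 0 < x.1 ^ 2 := lt_of_le_of_ne (sq_nonneg _) (Ne.symm (pow_ne_zero 2 hx1))
      nlinarith [sq_nonneg x.2.1]
    have hb := hK h hh i x.1 x.2.1 x.2.2 h1 h2 h3 hr0
    set r := rad x with hrre
    set u := h + gam r with hure
    have hu0 : 0 < u := by
      have := CuspAux.gam_nonneg r
      rw [hure]; linarith [hh.1]
    have hru0 : 0 ≤ r / u := div_nonneg hr0.le hu0.le
    calc f x = |∫ s in x.2.2..(h + gam (rad x)),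
          deriv (fun h' => tcmp βS βΩ h' i (x.1, x.2.1, s)) h| ^ 2 := (sq_abs _).symm
      _ ≤ (K * (1 + r / u)) ^ 2 := by
          apply pow_le_pow_left₀ (abs_nonneg _) _ 2
          exact hb
      _ ≤ g x := by
          simp only [hgdef]
          rw [← hrre, ← hure]
          nlinarith [sq_nonneg (1 - r / u), sq_nonneg K]
  by_cases hfi : Integrable f (volume.restrict (Omg h δ))
  · calc (∫ x in Omg h δ, f x) ≤ ∫ x in Omg h δ, g x := integral_mono_ae hfi hgOn hle
      _ ≤ (2 * K) ^ 2 := hgval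
  · rw [integral_undef hfi]
    positivity
end
end

section
/- Weighted Poincaré inequality in the aperture: there exists a universal constant C > 0 (one may take C = 1/2) such that for every h > 0, every δ ∈ (0,1/4), and every continuously differentiable function v on the closure of Ω_{h,δ} with v(x₁,x₂,0) = 0 whenever √(x₁²+x₂²) < δ, one has ∫_{Ω_{h,δ}} |v(x)|²/(h+γ_s(r))² dx ≤ C·∫_{Ω_{h,δ}} |∂₃v(x)|² dx, where r = √(x₁²+x₂²). -/
open Real MeasureTheory Set Topology Filter intervalIntegral

noncomputable section

lemma cs_helper (f : ℝ → ℝ) {a b : ℝ} (hab : a ≤ b) (hf : ContinuousOn f (Icc a b)) :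
    (∫ s in a..b, f s) ^ 2 ≤ (b - a) * ∫ s in a..b, (f s) ^ 2 := by
  rcases eq_or_lt_of_le hab with rfl | hlt
  · simp
  set I := ∫ s in a..b, f s with hI
  set J := ∫ s in a..b, (f s) ^ 2 with hJ
  have hfi : IntervalIntegrable f volume a b := hf.intervalIntegrable_of_Icc hab
  have hf2i : IntervalIntegrable (fun s => (f s) ^ 2) volume a b :=
    (((hf.mul hf).congr (fun x _ => by rw [Pi.mul_apply]; ring)).intervalIntegrable_of_Icc hab)
  set c := I / (b - a) with hc
  have hnn : 0 ≤ ∫ s in a..b, (f s - c) ^ 2 :=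
    intervalIntegral.integral_nonneg hab (fun x _ => sq_nonneg _)
  have hexp : (∫ s in a..b, (f s - c) ^ 2) = J - 2 * c * I + c ^ 2 * (b - a) := by
    have h1 : (fun s => (f s - c) ^ 2) = fun s => ((f s) ^ 2 - (2 * c) * f s) + c ^ 2 := by
      funext s; ring
    rw [h1, intervalIntegral.integral_add (hf2i.sub (hfi.const_mul _)) intervalIntegrable_const,
      intervalIntegral.integral_sub hf2i (hfi.const_mul _),
      intervalIntegral.integral_const_mul, intervalIntegral.integral_const, smul_eq_mul]
    ring
  have hba : (0:ℝ) < b - a := by linarith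
  rw [hexp, hc] at hnn
  have h2 : 0 ≤ J - I ^ 2 / (b - a) := by
    have e : J - 2 * (I / (b-a)) * I + (I / (b-a)) ^ 2 * (b - a) = J - I ^ 2 / (b - a) := by
      field_simp; ring
    linarith [e ▸ hnn]
  calc I ^ 2 = (I ^ 2 / (b - a)) * (b - a) := by field_simp
    _ ≤ J * (b - a) := by nlinarith
    _ = (b - a) * J := by ring

-- 1D fiber Poincaré estimate
lemma fiber_lemma {H : ℝ} (hH : 0 < H) (φ ψ : ℝ → ℝ)
    (hφc : ContinuousOn φ (Icc 0 H)) (hψc : ContinuousOn ψ (Icc 0 H))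
    (hd : ∀ t ∈ Ioo 0 H, HasDerivAt φ (ψ t) t) (h0 : φ 0 = 0) :
    (∫ t in Ioo 0 H, (φ t) ^ 2 / H ^ 2) ≤ (1/2) * ∫ t in Ioo 0 H, (ψ t) ^ 2 := by
  set K := ∫ t in Ioo 0 H, (ψ t) ^ 2 with hK
  have hψ2i : IntegrableOn (fun t => (ψ t) ^ 2) (Icc 0 H) volume :=
    ((hψc.mul hψc).congr (fun x _ => by rw [Pi.mul_apply]; ring)).integrableOn_compact isCompact_Icc
  have hψ2nn : ∀ t, 0 ≤ (ψ t) ^ 2 := fun t => sq_nonneg _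
  -- pointwise bound : for t ∈ Icc 0 H, (φ t)^2 ≤ t * K
  have key : ∀ t ∈ Icc 0 H, (φ t) ^ 2 ≤ t * K := by
    intro t ht
    obtain ⟨ht0, htH⟩ := ht
    have hsub : Icc 0 t ⊆ Icc 0 H := Icc_subset_Icc le_rfl htH
    have hftc : φ t - φ 0 = ∫ s in (0:ℝ)..t, ψ s := by
      refine (intervalIntegral.integral_eq_sub_of_hasDeriv_right_of_le ht0
        (hφc.mono hsub) (fun s hs => (hd s ⟨hs.1, hs.2.trans_le htH⟩).hasDerivWithinAt)
        ((hψc.mono hsub).intervalIntegrable_of_Icc ht0)).symm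
    have hphit : φ t = ∫ s in (0:ℝ)..t, ψ s := by rw [h0] at hftc; linarith
    have hcs : (φ t) ^ 2 ≤ t * ∫ s in (0:ℝ)..t, (ψ s) ^ 2 := by
      rw [hphit]
      have := cs_helper ψ ht0 (hψc.mono hsub)
      simpa using this
    have hmono : (∫ s in (0:ℝ)..t, (ψ s) ^ 2) ≤ K := by
      have hIoc : (∫ s in Ioc 0 H, (ψ s) ^ 2) = K := MeasureTheory.integral_Ioc_eq_integral_Ioo
      rw [intervalIntegral.integral_of_le ht0, ← hIoc]
      refine MeasureTheory.setIntegral_mono_set (hψ2i.mono_set Ioc_subset_Icc_self)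
        (Filter.Eventually.of_forall (fun s => sq_nonneg _)) ?_
      exact HasSubset.Subset.eventuallyLE (Ioc_subset_Ioc le_rfl htH)
    nlinarith [hcs, hmono, sq_nonneg (φ t)]
  -- integrate the pointwise bound
  have hKnn : 0 ≤ K := MeasureTheory.setIntegral_nonneg measurableSet_Ioo (fun t _ => sq_nonneg _)
  have hφ2i : IntegrableOn (fun t => (φ t) ^ 2 / H ^ 2) (Ioo 0 H) volume := by
    refine (((hφc.mul hφc).congr (fun x _ => by rw [Pi.mul_apply]; ring)).div_const _).integrableOn_compact isCompact_Icc |>.mono_set Ioo_subset_Icc_self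
  have hti : IntegrableOn (fun t : ℝ => t * K / H ^ 2) (Ioo 0 H) volume :=
    ((continuous_id.mul continuous_const).div_const _).continuousOn.integrableOn_compact isCompact_Icc |>.mono_set Ioo_subset_Icc_self
  have hmono2 : (∫ t in Ioo 0 H, (φ t) ^ 2 / H ^ 2) ≤ ∫ t in Ioo 0 H, t * K / H ^ 2 := by
    refine MeasureTheory.setIntegral_mono_on hφ2i hti measurableSet_Ioo ?_
    intro t ht
    have := key t (Ioo_subset_Icc_self ht)
    gcongr
  have hlin : (∫ t in Ioo 0 H, t * K / H ^ 2) = K / 2 := by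
    have h1 : (∫ t in Ioo 0 H, t * K / H ^ 2) = (∫ t in Ioo 0 H, t) * (K / H ^ 2) := by
      rw [← MeasureTheory.integral_mul_const]
      congr 1; funext t; ring
    have h2 : (∫ t in Ioo 0 H, t) = H ^ 2 / 2 := by
      rw [← MeasureTheory.integral_Ioc_eq_integral_Ioo,
        ← integral_of_le hH.le, integral_id]
      ring
    rw [h1, h2]
    field_simp
  rw [hlin] at hmono2; linarith

lemma gam_nonneg (r : ℝ) : 0 ≤ gam r := by
  have h1 : Real.sqrt (1 - r ^ 2) ≤ Real.sqrt 1 := Real.sqrt_le_sqrt (by nlinarith)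
  rw [Real.sqrt_one] at h1
  simp only [gam]; linarith

lemma gam_le_one (r : ℝ) : gam r ≤ 1 := by
  have := Real.sqrt_nonneg (1 - r ^ 2); simp only [gam]; linarith

lemma rad_continuous : Continuous rad := by
  unfold rad; fun_prop

lemma gamrad_continuous (h : ℝ) : Continuous fun x : ℝ × ℝ × ℝ => h + gam (rad x) := by
  unfold gam rad; fun_prop

lemma omg_open (h δ : ℝ) : IsOpen (Omg h δ) := by
  have h1 : IsOpen {x : ℝ × ℝ × ℝ | 0 < x.2.2} := isOpen_lt continuous_const (by fun_prop)
  have h2 : IsOpen {x : ℝ × ℝ × ℝ | x.2.2 < h + gam (rad x)} :=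
    isOpen_lt (by fun_prop) (gamrad_continuous h)
  have h3 : IsOpen {x : ℝ × ℝ × ℝ | rad x < δ} :=
    isOpen_lt rad_continuous continuous_const
  have : Omg h δ = ({x : ℝ × ℝ × ℝ | 0 < x.2.2} ∩ {x | x.2.2 < h + gam (rad x)}) ∩ {x | rad x < δ} := by
    ext x; simp [Omg, and_assoc]
  rw [this]
  exact (h1.inter h2).inter h3

lemma abs_fst_le_rad (x : ℝ × ℝ × ℝ) : |x.1| ≤ rad x := by
  rw [← Real.sqrt_sq_eq_abs]
  exact Real.sqrt_le_sqrt (by nlinarith [sq_nonneg x.2.1])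

lemma abs_snd_le_rad (x : ℝ × ℝ × ℝ) : |x.2.1| ≤ rad x := by
  rw [← Real.sqrt_sq_eq_abs]
  exact Real.sqrt_le_sqrt (by nlinarith [sq_nonneg x.1])

lemma omg_subset_box (h δ : ℝ) :
    Omg h δ ⊆ Icc (-δ) δ ×ˢ Icc (-δ) δ ×ˢ Icc 0 (h + 1) := by
  rintro x ⟨h0, htop, hr⟩
  have h1 := (abs_fst_le_rad x).trans_lt hr
  have h2 := (abs_snd_le_rad x).trans_lt hr
  rw [abs_lt] at h1 h2
  refine ⟨⟨h1.1.le, h1.2.le⟩, ⟨h2.1.le, h2.2.le⟩, h0.le, ?_⟩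
  have := gam_le_one (rad x); linarith

lemma omg_bounded (h δ : ℝ) : Bornology.IsBounded (Omg h δ) :=
  (Metric.isBounded_Icc (-δ) δ |>.prod (Metric.isBounded_Icc (-δ) δ |>.prod
    (Metric.isBounded_Icc 0 (h+1)))).subset (omg_subset_box h δ)

lemma omg_compact_closure (h δ : ℝ) : IsCompact (closure (Omg h δ)) :=
  Metric.isCompact_of_isClosed_isBounded isClosed_closure (omg_bounded h δ).closure

lemma omg_measure_ne_top (h δ : ℝ) : volume (Omg h δ) ≠ ⊤ :=
  ((omg_bounded h δ).measure_lt_top).ne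

lemma comp_hasDerivAt (v : ℝ × ℝ × ℝ → ℝ) (y : ℝ × ℝ × ℝ) (L : (ℝ × ℝ × ℝ) →L[ℝ] ℝ)
    (hL : HasFDerivAt v L y) :
    HasDerivAt (fun s => v (y.1, y.2.1, s)) (L (0, 0, 1)) y.2.2 := by
  have hcurve : HasDerivAt (fun s : ℝ => ((y.1, y.2.1, s) : ℝ × ℝ × ℝ))
      ((0 : ℝ), (0 : ℝ), (1 : ℝ)) y.2.2 :=
    (hasDerivAt_const _ _).prodMk ((hasDerivAt_const _ _).prodMk (hasDerivAt_id _))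
  have hy : ((y.1, y.2.1, y.2.2) : ℝ × ℝ × ℝ) = y := by simp
  have hL' : HasFDerivAt v L ((fun s : ℝ => ((y.1, y.2.1, s) : ℝ × ℝ × ℝ)) y.2.2) := by
    simpa [hy] using hL
  exact hL'.comp_hasDerivAt y.2.2 hcurve

lemma p3_eq (v : ℝ × ℝ × ℝ → ℝ) (y : ℝ × ℝ × ℝ) (L : (ℝ × ℝ × ℝ) →L[ℝ] ℝ)
    (hL : HasFDerivAt v L y) : p3 v y = L (0, 0, 1) :=
  (comp_hasDerivAt v y L hL).deriv

lemma norm_001 : ‖((0 : ℝ), (0 : ℝ), (1 : ℝ))‖ = 1 := by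
  simp [Prod.norm_def]

lemma p3_bound (h δ : ℝ) (v : ℝ × ℝ × ℝ → ℝ)
    (hv : ContDiffOn ℝ 1 v (closure (Omg h δ))) :
    ∃ M : ℝ, ∀ y ∈ Omg h δ, |p3 v y| ≤ M := by
  set S := Omg h δ with hS
  have hSo : IsOpen S := omg_open h δ
  have loc : ∀ x₀ : ℝ × ℝ × ℝ, ∃ O, IsOpen O ∧ x₀ ∈ O ∧
      ∃ M, 0 ≤ M ∧ ∀ y ∈ S ∩ O, |p3 v y| ≤ M := by
    intro x₀
    by_cases hx₀ : x₀ ∈ closure S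
    · have hcd : ContDiffWithinAt ℝ ((0 : ℕ) + 1) v (closure S) x₀ := by
        have := hv x₀ hx₀; exact_mod_cast this
      rw [contDiffWithinAt_succ_iff_hasFDerivWithinAt (by simp)] at hcd
      obtain ⟨u, hu, -, f', hf'd, hf'c⟩ := hcd
      rw [insert_eq_self.2 hx₀] at hu
      obtain ⟨o, ho, hx₀o, hou⟩ := mem_nhdsWithin.1 hu
      have hcont : ContinuousWithinAt f' u x₀ := hf'c.continuousWithinAt
      have hev : ∀ᶠ y in 𝓝[u] x₀, ‖f' y‖ < ‖f' x₀‖ + 1 :=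
        hcont.norm.eventually_lt_const (by linarith)
      obtain ⟨o', ho', hx₀o', ho'u⟩ := mem_nhdsWithin.1 hev
      refine ⟨o ∩ o', ho.inter ho', ⟨hx₀o, hx₀o'⟩, ‖f' x₀‖ + 1,
        by positivity, ?_⟩
      rintro y ⟨hyS, hyo, hyo'⟩
      have hyu : y ∈ u := hou ⟨hyo, subset_closure hyS⟩
      have hbnd : ‖f' y‖ < ‖f' x₀‖ + 1 := ho'u ⟨hyo', hyu⟩
      have hsub2 : S ∩ o ⊆ u := fun z hz => hou ⟨hz.2, subset_closure hz.1⟩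
      have hfd : HasFDerivAt v (f' y) y :=
        ((hf'd y hyu).mono hsub2).hasFDerivAt ((hSo.inter ho).mem_nhds ⟨hyS, hyo⟩)
      rw [p3_eq v y (f' y) hfd]
      calc |(f' y) (0, 0, 1)| = ‖(f' y) (0, 0, 1)‖ := (Real.norm_eq_abs _).symm
        _ ≤ ‖f' y‖ * ‖((0 : ℝ), (0 : ℝ), (1 : ℝ))‖ := (f' y).le_opNorm _
        _ = ‖f' y‖ := by rw [norm_001, mul_one]
        _ ≤ ‖f' x₀‖ + 1 := hbnd.le
    · exact ⟨(closure S)ᶜ, isClosed_closure.isOpen_compl, hx₀, 0, le_rfl,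
        fun y hy => absurd (subset_closure hy.1) hy.2⟩
  choose O hO hxO M hM0 hM using loc
  obtain ⟨t, -, hcover⟩ := (omg_compact_closure h δ).elim_nhds_subcover O
    (fun x _ => (hO x).mem_nhds (hxO x))
  refine ⟨∑ x ∈ t, M x, fun y hy => ?_⟩
  obtain ⟨x, hxt, hyO⟩ := mem_iUnion₂.1 (hcover (subset_closure hy))
  exact (hM x y ⟨hy, hyO⟩).trans (Finset.single_le_sum (fun i _ => hM0 i) hxt)

/-- Weighted Poincaré inequality in the aperture: for `v` of class `C¹` on the closure of
`Ω_{h,δ}` vanishing on the bottom plate,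
`∫_{Ω_{h,δ}} |v|²/(h+γ_s(r))² ≤ C ∫_{Ω_{h,δ}} |∂₃v|²` with a universal constant `C`. -/
theorem weighted_poincare_aperture :
    ∃ C : ℝ, 0 < C ∧ ∀ h δ : ℝ, 0 < h → δ ∈ Set.Ioo (0 : ℝ) (1 / 4) →
      ∀ v : ℝ × ℝ × ℝ → ℝ, ContDiffOn ℝ 1 v (closure (Omg h δ)) →
        (∀ x₁ x₂ : ℝ, Real.sqrt (x₁ ^ 2 + x₂ ^ 2) < δ → v (x₁, x₂, 0) = 0) →
        (∫ x in Omg h δ, (v x) ^ 2 / (h + gam (rad x)) ^ 2) ≤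
          C * ∫ x in Omg h δ, (p3 v x) ^ 2 := by
  refine ⟨1/2, by norm_num, ?_⟩
  intro h δ hh hδ v hv hv0
  obtain ⟨hδ0, hδ4⟩ := hδ
  set S := Omg h δ with hSdef
  have hSo : IsOpen S := omg_open h δ
  have hSm : MeasurableSet S := hSo.measurableSet
  have hμS : volume S ≠ ⊤ := omg_measure_ne_top h δ
  set f₁ : ℝ × ℝ × ℝ → ℝ := fun x => (v x) ^ 2 / (h + gam (rad x)) ^ 2 with hf₁def
  set f₂ : ℝ × ℝ × ℝ → ℝ := fun x => (p3 v x) ^ 2 with hf₂def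
  have hwt : ∀ x : ℝ × ℝ × ℝ, 0 < h + gam (rad x) := fun x => by
    have := gam_nonneg (rad x); linarith
  -- integrability of f₁ on S
  obtain ⟨B, hB⟩ := (omg_compact_closure h δ).exists_bound_of_continuousOn hv.continuousOn
  have hcv : ContinuousOn v S := hv.continuousOn.mono subset_closure
  have hcont₁ : ContinuousOn f₁ S := by
    refine (hcv.pow 2).div (((gamrad_continuous h).pow 2).continuousOn) ?_
    exact fun x _ => ne_of_gt (by have := hwt x; positivity)
  have hbd₁ : ∀ x ∈ S, ‖f₁ x‖ ≤ B ^ 2 / h ^ 2 := by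
    intro x hx
    have hvB : |v x| ≤ B := by
      have := hB x (subset_closure hx); rwa [Real.norm_eq_abs] at this
    have hf₁nn : 0 ≤ f₁ x := by
      have := hwt x; positivity
    rw [Real.norm_eq_abs, abs_of_nonneg hf₁nn]
    refine div_le_div₀ (by positivity) ?_ (by positivity) ?_
    · calc (v x) ^ 2 = |v x| ^ 2 := (sq_abs _).symm
        _ ≤ B ^ 2 := by nlinarith [abs_nonneg (v x)]
    · have := gam_nonneg (rad x); nlinarith [hwt x]
  have hint₁ : IntegrableOn f₁ S volume := by
    refine ((integrableOn_const (C := B ^ 2 / h ^ 2) hμS)).mono'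
      (hcont₁.aestronglyMeasurable hSm) ?_
    exact (ae_restrict_iff' hSm).2 (ae_of_all _ hbd₁)
  -- integrability of f₂ on S
  obtain ⟨M, hM⟩ := p3_bound h δ v hv
  have hp3S : ∀ x ∈ S, p3 v x = fderiv ℝ v x (0, 0, 1) := by
    intro x hx
    have hdiff : DifferentiableAt ℝ v x :=
      (hv.contDiffAt (mem_of_superset (hSo.mem_nhds hx) subset_closure)).differentiableAt one_ne_zero
    exact p3_eq v x _ hdiff.hasFDerivAt
  have hcont₂ : ContinuousOn f₂ S := by
    have hfdc : ContinuousOn (fderiv ℝ v) S :=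
      (hv.mono subset_closure).continuousOn_fderiv_of_isOpen hSo le_rfl
    refine ContinuousOn.congr
      (f := fun x => (fderiv ℝ v x (((0:ℝ), (0:ℝ), (1:ℝ)))) ^ 2)
      ((hfdc.clm_apply (continuousOn_const (c := ((0:ℝ), (0:ℝ), (1:ℝ))))).pow 2) ?_
    intro x hx
    simp only [hf₂def, hp3S x hx]
  have hbd₂ : ∀ x ∈ S, ‖f₂ x‖ ≤ M ^ 2 := by
    intro x hx
    have h1 := hM x hx
    have h2 : 0 ≤ f₂ x := sq_nonneg _
    rw [Real.norm_eq_abs, abs_of_nonneg h2]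
    calc (p3 v x) ^ 2 = |p3 v x| ^ 2 := (sq_abs _).symm
      _ ≤ M ^ 2 := by nlinarith [abs_nonneg (p3 v x)]
  have hint₂ : IntegrableOn f₂ S volume := by
    refine ((integrableOn_const (C := M ^ 2) hμS)).mono'
      (hcont₂.aestronglyMeasurable hSm) ?_
    exact (ae_restrict_iff' hSm).2 (ae_of_all _ hbd₂)
  -- indicators
  set F₁ : ℝ × ℝ × ℝ → ℝ := S.indicator f₁ with hF₁def
  set F₂ : ℝ × ℝ × ℝ → ℝ := S.indicator f₂ with hF₂def
  have hF₁ : Integrable F₁ volume := (integrable_indicator_iff hSm).2 hint₁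
  have hF₂ : Integrable F₂ volume := (integrable_indicator_iff hSm).2 hint₂
  have hvol3 : (volume : Measure (ℝ × ℝ × ℝ)) =
      (volume : Measure ℝ).prod (volume : Measure (ℝ × ℝ)) := Measure.volume_eq_prod _ _
  have hvol2 : (volume : Measure (ℝ × ℝ)) =
      (volume : Measure ℝ).prod (volume : Measure ℝ) := Measure.volume_eq_prod _ _
  have hF₁' : Integrable F₁ ((volume : Measure ℝ).prod (volume : Measure (ℝ × ℝ))) :=
    hvol3 ▸ hF₁
  have hF₂' : Integrable F₂ ((volume : Measure ℝ).prod (volume : Measure (ℝ × ℝ))) :=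
    hvol3 ▸ hF₂
  -- the fiberwise inequality, valid for every (a, b)
  have fib : ∀ a b : ℝ, (∫ t, F₁ (a, b, t)) ≤ (1/2) * ∫ t, F₂ (a, b, t) := by
    intro a b
    set r := Real.sqrt (a ^ 2 + b ^ 2) with hrdef
    have hradab : ∀ t : ℝ, rad (a, b, t) = r := fun t => rfl
    by_cases hr : r < δ
    · set H := h + gam r with hHdef
      have hH : 0 < H := by have := gam_nonneg r; linarith
      have hmemS : ∀ t : ℝ, ((a, b, t) : ℝ × ℝ × ℝ) ∈ S ↔ t ∈ Ioo 0 H := by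
        intro t
        simp only [hSdef, Omg, mem_setOf_eq, hradab, mem_Ioo, ← hHdef]
        exact ⟨fun ⟨h1, h2, _⟩ => ⟨h1, h2⟩, fun ⟨h1, h2⟩ => ⟨h1, h2, hr⟩⟩
      set φ : ℝ → ℝ := fun t => v (a, b, t) with hφdef
      set ψ : ℝ → ℝ := derivWithin φ (Icc 0 H) with hψdef
      have hι : ContDiff ℝ 1 (fun t : ℝ => ((a, b, t) : ℝ × ℝ × ℝ)) :=
        contDiff_const.prodMk (contDiff_const.prodMk contDiff_id)
      have hφ : ContDiffOn ℝ 1 φ (Icc 0 H) := by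
        refine hv.comp hι.contDiffOn ?_
        intro t ht
        have hIcc : Icc (0:ℝ) H = closure (Ioo 0 H) := (closure_Ioo hH.ne).symm
        have h1 : (fun t : ℝ => ((a, b, t) : ℝ × ℝ × ℝ)) '' (Ioo 0 H) ⊆ S := by
          rintro _ ⟨t', ht', rfl⟩
          exact (hmemS t').2 ht'
        have h2 : ((a, b, t) : ℝ × ℝ × ℝ) ∈
            (fun t : ℝ => ((a, b, t) : ℝ × ℝ × ℝ)) '' closure (Ioo 0 H) :=
          mem_image_of_mem _ (hIcc ▸ ht)
        have h3 := image_closure_subset_closure_image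
          (f := fun t : ℝ => ((a, b, t) : ℝ × ℝ × ℝ)) (s := Ioo 0 H) hι.continuous
        exact closure_mono h1 (h3 h2)
      have hφc : ContinuousOn φ (Icc 0 H) := hφ.continuousOn
      have hψc : ContinuousOn ψ (Icc 0 H) :=
        hφ.continuousOn_derivWithin (uniqueDiffOn_Icc hH) le_rfl
      have hder : ∀ t ∈ Ioo 0 H, HasDerivAt φ (ψ t) t := by
        intro t ht
        have hmemn : Icc (0:ℝ) H ∈ 𝓝 t := Icc_mem_nhds ht.1 ht.2
        have hdiff : DifferentiableAt ℝ φ t :=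
          ((hφ t (Ioo_subset_Icc_self ht)).contDiffAt hmemn).differentiableAt one_ne_zero
        have heq : ψ t = deriv φ t := derivWithin_of_mem_nhds hmemn
        rw [heq]
        exact hdiff.hasDerivAt
      have h0 : φ 0 = 0 := hv0 a b hr
      have hslice1 : (∫ t, F₁ (a, b, t)) = ∫ t in Ioo 0 H, (φ t) ^ 2 / H ^ 2 := by
        have e : (fun t => F₁ (a, b, t)) = (Ioo 0 H).indicator
            (fun t => (φ t) ^ 2 / H ^ 2) := by
          funext t
          by_cases ht : t ∈ Ioo 0 H
          · rw [indicator_of_mem ht, hF₁def, indicator_of_mem ((hmemS t).2 ht)]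
            simp only [hf₁def, hradab, hφdef, hHdef]
          · rw [indicator_of_notMem ht, hF₁def,
              indicator_of_notMem (fun hc => ht ((hmemS t).1 hc))]
        rw [e, MeasureTheory.integral_indicator measurableSet_Ioo]
      have hslice2 : (∫ t, F₂ (a, b, t)) = ∫ t in Ioo 0 H, (ψ t) ^ 2 := by
        have e : (fun t => F₂ (a, b, t)) = (Ioo 0 H).indicator
            (fun t => (p3 v (a, b, t)) ^ 2) := by
          funext t
          by_cases ht : t ∈ Ioo 0 H
          · rw [indicator_of_mem ht, hF₂def, indicator_of_mem ((hmemS t).2 ht)]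
          · rw [indicator_of_notMem ht, hF₂def,
              indicator_of_notMem (fun hc => ht ((hmemS t).1 hc))]
        rw [e, MeasureTheory.integral_indicator measurableSet_Ioo]
        refine setIntegral_congr_fun measurableSet_Ioo ?_
        intro t ht
        have hmemn : Icc (0:ℝ) H ∈ 𝓝 t := Icc_mem_nhds ht.1 ht.2
        have : p3 v (a, b, t) = ψ t := (derivWithin_of_mem_nhds hmemn).symm
        simp only [this]
      rw [hslice1, hslice2]
      exact fiber_lemma hH φ ψ hφc hψc hder h0
    · have h1 : ∀ t : ℝ, F₁ (a, b, t) = 0 := by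
        intro t
        refine indicator_of_notMem (fun hc => hr ?_) _
        have := hc.2.2
        rwa [hradab t] at this
      have h2 : ∀ t : ℝ, 0 ≤ F₂ (a, b, t) := by
        intro t
        exact indicator_nonneg (fun x _ => sq_nonneg _) _
      have e1 : (∫ t, F₁ (a, b, t)) = 0 := by simp [h1]
      rw [e1]
      have : (0:ℝ) ≤ ∫ t, F₂ (a, b, t) := integral_nonneg h2
      linarith
  -- assemble via Fubini
  have main : (∫ x, F₁ x) ≤ (1/2) * ∫ x, F₂ x := by
    have e₁ : (∫ x, F₁ x) = ∫ a, ∫ yz, F₁ (a, yz) := by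
      rw [hvol3]; exact integral_prod _ hF₁'
    have e₂ : (∫ x, F₂ x) = ∫ a, ∫ yz, F₂ (a, yz) := by
      rw [hvol3]; exact integral_prod _ hF₂'
    rw [e₁, e₂, ← MeasureTheory.integral_const_mul]
    refine integral_mono_ae hF₁'.integral_prod_left
      (hF₂'.integral_prod_left.const_mul _) ?_
    filter_upwards [hF₁'.prod_right_ae, hF₂'.prod_right_ae] with a ha₁ ha₂
    have ha₁' : Integrable (fun yz => F₁ (a, yz))
        ((volume : Measure ℝ).prod (volume : Measure ℝ)) := hvol2 ▸ ha₁
    have ha₂' : Integrable (fun yz => F₂ (a, yz))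
        ((volume : Measure ℝ).prod (volume : Measure ℝ)) := hvol2 ▸ ha₂
    have e₃ : (∫ yz, F₁ (a, yz)) = ∫ b, ∫ t, F₁ (a, b, t) := by
      rw [hvol2]; exact integral_prod _ ha₁'
    have e₄ : (∫ yz, F₂ (a, yz)) = ∫ b, ∫ t, F₂ (a, b, t) := by
      rw [hvol2]; exact integral_prod _ ha₂'
    rw [e₃, e₄, ← MeasureTheory.integral_const_mul]
    refine integral_mono ha₁'.integral_prod_left
      (ha₂'.integral_prod_left.const_mul _) ?_
    intro b
    exact fib a b
  calc (∫ x in S, f₁ x) = ∫ x, F₁ x := (MeasureTheory.integral_indicator hSm).symm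
    _ ≤ (1/2) * ∫ x, F₂ x := main
    _ = (1/2) * ∫ x in S, f₂ x := by rw [MeasureTheory.integral_indicator hSm]
end
end
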